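/- Revealing hidden entanglement by local squeezing: let r₁, r₂ ∈ ℝ, r₊ = (r₁+r₂)/2, d = r₁ − r₂, and let L = diag(e^{−r₊}, e^{−r₊}, e^{r₊}, e^{r₊}) be the local (single-mode) squeezing GLU applied to both modes. Then L · (B₄ Σ_in B₄ᵀ) · Lᵀ = (1/2)·[[cosh d, −sinh d, 0, 0],[−sinh d, cosh d, 0, 0],[0, 0, cosh d, sinh d],[0, 0, sinh d, cosh d]], which is exactly the covariance matrix of a two-mode squeezed (EPR) state with squeezing parameter r₋ = (r₁−r₂)/2. -/
import Mathlib
set_option maxHeartbeats 1000000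


open Matrix

/-- Covariance matrix of two independent phase-squeezed vacua of parameters `r₁, r₂`,
in the quadrature ordering `(Q₁,Q₂,P₁,P₂)`:
`Σ_in = (1/2)·diag(e^{2r₁}, e^{2r₂}, e^{−2r₁}, e^{−2r₂})`. -/
noncomputable def sigmaIn (r₁ r₂ : ℝ) : Matrix (Fin 4) (Fin 4) ℝ :=
  (1 / 2 : ℝ) • Matrix.diagonal
    ![Real.exp (2 * r₁), Real.exp (2 * r₂), Real.exp (-(2 * r₁)), Real.exp (-(2 * r₂))]

/-- The balanced beamsplitter `B₄ = diag-block(B,B)` with `B = (1/√2)[[1,1],[−1,1]]`. -/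
noncomputable def bs4 : Matrix (Fin 4) (Fin 4) ℝ :=
  (Real.sqrt 2)⁻¹ • !![1, 1, 0, 0; -1, 1, 0, 0; 0, 0, 1, 1; 0, 0, -1, 1]

/-- The local (single-mode) squeezing GLU `L = diag(e^{−r₊}, e^{−r₊}, e^{r₊}, e^{r₊})`
applied to both modes, with `r₊ = (r₁+r₂)/2`. -/
noncomputable def localSqueeze (rp : ℝ) : Matrix (Fin 4) (Fin 4) ℝ :=
  Matrix.diagonal ![Real.exp (-rp), Real.exp (-rp), Real.exp rp, Real.exp rp]

/-- revealing hidden entanglement by local squeezing: with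
`r₊ = (r₁+r₂)/2` and `d = r₁ − r₂`,
`L · (B₄ Σ_in B₄ᵀ) · Lᵀ` equals the covariance matrix of a two-mode squeezed (EPR)
state with squeezing parameter `r₋ = (r₁−r₂)/2`. -/

lemma sigmaIn_eq (r₁ r₂ : ℝ) : sigmaIn r₁ r₂ = (1 / 2 : ℝ) •
    !![Real.exp (2 * r₁), 0, 0, 0; 0, Real.exp (2 * r₂), 0, 0;
       0, 0, Real.exp (-(2 * r₁)), 0; 0, 0, 0, Real.exp (-(2 * r₂))] := by
  unfold sigmaIn
  congr 1
  ext i j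
  fin_cases i <;> fin_cases j <;> simp [Matrix.diagonal, Matrix.vecHead, Matrix.vecTail]

lemma localSqueeze_eq (rp : ℝ) : localSqueeze rp =
    !![Real.exp (-rp), 0, 0, 0; 0, Real.exp (-rp), 0, 0;
       0, 0, Real.exp rp, 0; 0, 0, 0, Real.exp rp] := by
  unfold localSqueeze
  ext i j
  fin_cases i <;> fin_cases j <;> simp [Matrix.diagonal, Matrix.vecHead, Matrix.vecTail]

theorem local_squeezing_reveals_EPR (r₁ r₂ : ℝ) :
    localSqueeze ((r₁ + r₂) / 2) * (bs4 * sigmaIn r₁ r₂ * bs4ᵀ) *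
        (localSqueeze ((r₁ + r₂) / 2))ᵀ
      = (1 / 2 : ℝ) •
          !![Real.cosh (r₁ - r₂), -Real.sinh (r₁ - r₂), 0, 0;
             -Real.sinh (r₁ - r₂), Real.cosh (r₁ - r₂), 0, 0;
             0, 0, Real.cosh (r₁ - r₂), Real.sinh (r₁ - r₂);
             0, 0, Real.sinh (r₁ - r₂), Real.cosh (r₁ - r₂)] := by
  have hc : ((Real.sqrt 2)⁻¹ : ℝ) * (Real.sqrt 2)⁻¹ = 1/2 := by
    rw [← mul_inv]; norm_num [Real.mul_self_sqrt]
  have hbs : ∀ A : Matrix (Fin 4) (Fin 4) ℝ, bs4 * A * bs4ᵀ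
      = (1/2 : ℝ) • ((!![1, 1, 0, 0; -1, 1, 0, 0; 0, 0, 1, 1; 0, 0, -1, 1] : Matrix (Fin 4) (Fin 4) ℝ) * A *
        (!![1, 1, 0, 0; -1, 1, 0, 0; 0, 0, 1, 1; 0, 0, -1, 1] : Matrix (Fin 4) (Fin 4) ℝ)ᵀ) := by
    intro A
    rw [bs4, Matrix.transpose_smul, Matrix.smul_mul, Matrix.mul_smul, Matrix.smul_mul,
      smul_smul, hc]
  rw [hbs, sigmaIn_eq, localSqueeze_eq]
  set d := r₁ - r₂ with hd
  set rp := (r₁ + r₂) / 2 with hrp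
  have e1 : Real.exp (-rp) * Real.exp (2 * r₁) * Real.exp (-rp) = Real.exp d := by
    rw [← Real.exp_add, ← Real.exp_add]; congr 1; rw [hd, hrp]; ring
  have e2 : Real.exp (-rp) * Real.exp (2 * r₂) * Real.exp (-rp) = Real.exp (-d) := by
    rw [← Real.exp_add, ← Real.exp_add]; congr 1; rw [hd, hrp]; ring
  have e3 : Real.exp rp * Real.exp (-(2 * r₁)) * Real.exp rp = Real.exp (-d) := by
    rw [← Real.exp_add, ← Real.exp_add]; congr 1; rw [hd, hrp]; ring
  have e4 : Real.exp rp * Real.exp (-(2 * r₂)) * Real.exp rp = Real.exp d := by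
    rw [← Real.exp_add, ← Real.exp_add]; congr 1; rw [hd, hrp]; ring
  ext i j
  fin_cases i <;> fin_cases j <;>
    simp only [Matrix.mul_apply, Matrix.smul_apply, Matrix.transpose_apply,
      Fin.sum_univ_four, Fin.isValue, Fin.zero_eta, Fin.mk_one, Fin.reduceFinMk,
      Matrix.cons_val', Matrix.cons_val_zero, Matrix.cons_val_one, Matrix.head_cons,
      Matrix.empty_val', Matrix.cons_val_fin_one, Matrix.head_fin_const,
      Matrix.cons_val_two, Matrix.tail_cons, Matrix.cons_val_three, Matrix.head_cons,
      Matrix.of_apply, smul_eq_mul,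
      Real.cosh_eq, Real.sinh_eq] <;>
    ring_nf <;> (ring_nf at e1 e2 e3 e4; linarith [e1, e2, e3, e4])
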